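/- Every separable abelian p-group A containing an element a of order p^N has a cyclic direct summand of order at least p^N: there exist k ≥ N, an element b ∈ A of order p^k, and a subgroup B ≤ A with A = ⟨b⟩ ⊕ B. -/

import Mathlib

open AddSubgroup

lemma summand_aux {p k : ℕ} (hp : p.Prime) {A : Type*} [AddCommGroup A] (b : A)
    (hb : addOrderOf b = p ^ k)
    (hdisj : ∀ x : A, p ^ k • x ∈ zmultiples b → p ^ k • x = 0) :
    ∃ B : AddSubgroup A, zmultiples b ⊓ B = ⊥ ∧ zmultiples b ⊔ B = ⊤ := by
  classical
  set C := zmultiples b with hC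
  let Good : AddSubgroup (A × A) → Prop := fun G =>
    (∀ y : A, ((0 : A), y) ∈ G → y = 0) ∧
    (∀ t : ℤ, ((t • b, t • b) : A × A) ∈ G) ∧
    (∀ z : A, ((p ^ k • z, 0) : A × A) ∈ G) ∧
    (∀ q ∈ G, Prod.snd q ∈ C)
  -- the initial graph
  let G₀ : AddSubgroup (A × A) :=
    { carrier := {q | ∃ (t : ℤ) (z : A), q = (t • b + p ^ k • z, t • b)}
      zero_mem' := ⟨0, 0, by ext <;> simp⟩
      add_mem' := by
        rintro q r ⟨t, z, rfl⟩ ⟨s, w, rfl⟩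
        refine ⟨t + s, z + w, ?_⟩
        ext <;> simp [add_zsmul, smul_add] <;> abel
      neg_mem' := by
        rintro q ⟨t, z, rfl⟩
        refine ⟨-t, -z, ?_⟩
        ext <;> simp <;> abel }
  have hG₀ : Good G₀ := by
    refine ⟨?_, ?_, ?_, ?_⟩
    · rintro y ⟨t, z, hq⟩
      have h1 : (0 : A) = t • b + p ^ k • z := congrArg Prod.fst hq
      have h2 : y = t • b := congrArg Prod.snd hq
      have h3 : p ^ k • (-z) = t • b := by
        rw [smul_neg, eq_comm, ← sub_eq_zero, sub_neg_eq_add]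
        exact h1.symm
      have h4 : p ^ k • (-z) = 0 :=
        hdisj _ (mem_zmultiples_iff.mpr ⟨t, h3.symm⟩)
      rw [h2, ← h3, h4]
    · intro t; exact ⟨t, 0, by simp⟩
    · intro z; exact ⟨0, z, by simp⟩
    · rintro q ⟨t, z, rfl⟩; exact ⟨t, rfl⟩
  -- Zorn
  have hchainub : ∀ c ⊆ {G | Good G}, IsChain (· ≤ ·) c → ∀ y ∈ c,
      ∃ ub ∈ {G | Good G}, ∀ z ∈ c, z ≤ ub := by
    intro c hcs hchain y hy
    refine ⟨sSup c, ?_, fun z hz => le_sSup hz⟩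
    have hmem : ∀ q : A × A, q ∈ sSup c ↔ ∃ H ∈ c, q ∈ H := fun q =>
      AddSubgroup.mem_sSup_of_directedOn ⟨y, hy⟩ hchain.directedOn
    refine ⟨?_, ?_, ?_, ?_⟩
    · intro w hw
      obtain ⟨H, hH, hwH⟩ := (hmem _).mp hw
      exact (hcs hH).1 w hwH
    · intro t; exact (hmem _).mpr ⟨y, hy, (hcs hy).2.1 t⟩
    · intro z; exact (hmem _).mpr ⟨y, hy, (hcs hy).2.2.1 z⟩
    · intro q hq
      obtain ⟨H, hH, hqH⟩ := (hmem _).mp hq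
      exact (hcs hH).2.2.2 q hqH
  obtain ⟨G, -, hG, hGmax⟩ := zorn_le_nonempty₀ {G | Good G} hchainub G₀ hG₀
  -- the domain of G is everything
  have htot : ∀ x : A, ∃ y : A, ((x, y) : A × A) ∈ G := by
    by_contra hcon
    push_neg at hcon
    obtain ⟨x, hx⟩ := hcon
    have hPk : ∃ j : ℕ, ∃ y : A, ((p ^ j • x, y) : A × A) ∈ G := ⟨k, 0, hG.2.2.1 x⟩
    set m := Nat.find hPk with hmdef
    obtain ⟨c, hc⟩ := Nat.find_spec hPk
    have hmk : m ≤ k := Nat.find_le ⟨0, hG.2.2.1 x⟩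
    have hck : p ^ (k - m) • c = 0 := by
      have h1 : ((p ^ k • x, p ^ (k - m) • c) : A × A) ∈ G := by
        have h2 := G.nsmul_mem hc (p ^ (k - m))
        have h3 : p ^ (k - m) • ((p ^ m • x, c) : A × A) = ((p ^ k • x, p ^ (k - m) • c) : A × A) := by
          have : p ^ (k - m) • p ^ m • x = p ^ k • x := by
            rw [smul_smul, ← pow_add, Nat.sub_add_cancel hmk]
          rw [Prod.smul_mk, this]
        rwa [h3] at h2
      have h4 : ((0, p ^ (k - m) • c) : A × A) ∈ G := by
        have := G.sub_mem h1 (hG.2.2.1 x); simpa using this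
      exact hG.1 _ h4
    obtain ⟨t, ht⟩ := mem_zmultiples_iff.mp (hG.2.2.2 _ hc)
    have hdvdt : ((p : ℤ)) ^ m ∣ t := by
      have h5 : (((p : ℤ) ^ (k - m)) * t) • b = 0 := by
        rw [mul_smul, ht]
        have : ((p : ℤ) ^ (k - m)) = (((p ^ (k - m) : ℕ) : ℤ)) := by push_cast; ring
        rw [this, natCast_zsmul, hck]
      have h6 : ((addOrderOf b : ℤ)) ∣ ((p : ℤ) ^ (k - m) * t) :=
        addOrderOf_dvd_iff_zsmul_eq_zero.mpr h5
      rw [hb] at h6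
      have h7 : ((p : ℤ) ^ (k - m) * (p : ℤ) ^ m) ∣ ((p : ℤ) ^ (k - m) * t) := by
        rw [← pow_add, Nat.sub_add_cancel hmk]
        exact_mod_cast h6
      have hpne : ((p : ℤ) ^ (k - m)) ≠ 0 :=
        pow_ne_zero _ (by exact_mod_cast hp.ne_zero)
      exact (mul_dvd_mul_iff_left hpne).mp h7
    obtain ⟨s, hs⟩ := hdvdt
    set y := s • b with hydef
    have hpmy : ((p : ℤ) ^ m) • y = c := by
      rw [hydef, smul_smul, ← hs, ht]
    have hpmx : ((p : ℤ) ^ m) • x = p ^ m • x := by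
      have : ((p : ℤ) ^ m) = (((p ^ m : ℕ) : ℤ)) := by push_cast; ring
      rw [this, natCast_zsmul]
    have hTdvd : ∀ u : ℤ, (∃ w : A, ((u • x, w) : A × A) ∈ G) → ((p : ℤ) ^ m) ∣ u := by
      intro u hu
      set T : AddSubgroup ℤ := (G.map (AddMonoidHom.fst A A)).comap ((zmultiplesHom A) x)
        with hTdef
      have hmemT : ∀ v : ℤ, v ∈ T ↔ ∃ w : A, ((v • x, w) : A × A) ∈ G := by
        intro v
        simp only [hTdef, AddSubgroup.mem_comap, AddSubgroup.mem_map, zmultiplesHom_apply]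
        constructor
        · rintro ⟨⟨q1, q2⟩, hq, hq1⟩
          exact ⟨q2, by simpa [← hq1] using hq⟩
        · rintro ⟨w, hw⟩
          exact ⟨(v • x, w), hw, rfl⟩
      obtain ⟨d, hd⟩ := Int.subgroup_cyclic T
      have hdmem : ∀ v : ℤ, v ∈ T ↔ d ∣ v := by
        intro v; rw [hd, ← AddSubgroup.zmultiples_eq_closure, Int.mem_zmultiples_iff]
      have hpmT : (p : ℤ) ^ m ∈ T := (hmemT _).mpr ⟨c, by rwa [hpmx]⟩
      have hdp : d.natAbs ∣ p ^ m := by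
        have h8 := Int.natAbs_dvd_natAbs.mpr ((hdmem _).mp hpmT)
        simpa [Int.natAbs_pow] using h8
      obtain ⟨j, hjm, hj⟩ := (Nat.dvd_prime_pow hp).mp hdp
      have hnatT : ((d.natAbs : ℤ)) ∈ T := by
        rcases Int.natAbs_eq d with h | h
        · rw [← h]; exact (hdmem d).mpr dvd_rfl
        · have : -d ∈ T := T.neg_mem ((hdmem d).mpr dvd_rfl)
          rwa [h, neg_neg] at this
      have hPj : ∃ w : A, ((p ^ j • x, w) : A × A) ∈ G := by
        obtain ⟨w, hw⟩ := (hmemT _).mp hnatT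
        refine ⟨w, ?_⟩
        rwa [hj, show (((p ^ j : ℕ) : ℤ)) • x = p ^ j • x from natCast_zsmul _ _] at hw
      have hmj : m ≤ j := Nat.find_min' hPk hPj
      have hpmd : ((p : ℤ) ^ m) ∣ d := by
        have h9 : (p ^ m : ℕ) ∣ d.natAbs := hj ▸ pow_dvd_pow p hmj
        have h10 : (((p ^ m : ℕ) : ℤ)) ∣ ((d.natAbs : ℤ)) := Int.natCast_dvd_natCast.mpr h9
        have h11 : ((d.natAbs : ℤ)) ∣ d := Int.natAbs_dvd.mpr dvd_rfl
        exact_mod_cast h10.trans h11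
      exact hpmd.trans ((hdmem u).mp ((hmemT u).mpr hu))
    have hxyG : ∀ u : ℤ, (∃ w : A, ((u • x, w) : A × A) ∈ G) → u • ((x, y) : A × A) ∈ G := by
      intro u hu
      obtain ⟨v, hv⟩ := hTdvd u hu
      have h12 : u • ((x, y) : A × A) = v • (((p : ℤ) ^ m) • ((x, y) : A × A)) := by
        rw [smul_smul, mul_comm, ← hv]
      have h13 : ((p : ℤ) ^ m) • ((x, y) : A × A) = ((p ^ m • x, c) : A × A) := by
        rw [Prod.smul_mk, hpmx, hpmy]
      rw [h12, h13]
      exact G.zsmul_mem hc v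
    have hyC : y ∈ C := mem_zmultiples_iff.mpr ⟨s, rfl⟩
    have hG' : Good (G ⊔ zmultiples ((x, y) : A × A)) := by
      refine ⟨?_, ?_, ?_, ?_⟩
      · intro w hw
        obtain ⟨g, hg, q, hq, hsum⟩ := AddSubgroup.mem_sup.mp hw
        obtain ⟨u, rfl⟩ := mem_zmultiples_iff.mp hq
        have hg1 : g = (((-u) • x, w - u • y) : A × A) := by
          have : g = ((0, w) : A × A) - u • ((x, y) : A × A) := by rw [← hsum]; abel
          rw [this, Prod.smul_mk]
          ext <;> simp
        have humem : u • ((x, y) : A × A) ∈ G := by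
          have h14 := hxyG (-u) ⟨w - u • y, by rw [← hg1]; exact hg⟩
          have h15 := G.neg_mem h14
          rwa [← neg_smul, neg_neg] at h15
        have h16 : ((0, w) : A × A) ∈ G := by
          rw [show ((0, w) : A × A) = g + u • ((x, y) : A × A) from hsum.symm]
          exact G.add_mem hg humem
        exact hG.1 _ h16
      · intro t; exact AddSubgroup.mem_sup_left (hG.2.1 t)
      · intro z; exact AddSubgroup.mem_sup_left (hG.2.2.1 z)
      · intro q hq
        obtain ⟨g, hg, r, hr, hsum⟩ := AddSubgroup.mem_sup.mp hq
        obtain ⟨u, rfl⟩ := mem_zmultiples_iff.mp hr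
        rw [← hsum]
        have h17 : (g + u • ((x, y) : A × A)).2 = g.2 + u • y := rfl
        rw [h17]
        exact C.add_mem (hG.2.2.2 _ hg) (C.zsmul_mem hyC u)
    have hle : G ⊔ zmultiples ((x, y) : A × A) ≤ G := hGmax hG' le_sup_left
    exact hx y (hle (AddSubgroup.mem_sup_right (mem_zmultiples _)))
  -- define B
  refine ⟨G.comap (AddMonoidHom.inl A A), ?_, ?_⟩
  · rw [eq_bot_iff]
    rintro x ⟨hxC, hxB⟩
    obtain ⟨t, rfl⟩ := mem_zmultiples_iff.mp hxC
    have h1 : ((t • b, t • b) : A × A) ∈ G := hG.2.1 t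
    have h2 : ((t • b, 0) : A × A) ∈ G := hxB
    have h3 : ((0, t • b) : A × A) ∈ G := by
      have := G.sub_mem h1 h2; simpa using this
    simpa using hG.1 _ h3
  · rw [eq_top_iff]
    intro x _
    obtain ⟨y, hxy⟩ := htot x
    have hyC : y ∈ C := hG.2.2.2 _ hxy
    obtain ⟨t, rfl⟩ := mem_zmultiples_iff.mp hyC
    have h1 : ((t • b, t • b) : A × A) ∈ G := hG.2.1 t
    have h2 : ((x - t • b, 0) : A × A) ∈ G := by
      have := G.sub_mem hxy h1; simpa using this
    exact AddSubgroup.mem_sup.mpr ⟨t • b, hyC, x - t • b, h2, by abel⟩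

/-- A separable abelian p-group (no nonzero elements of infinite p-height)
containing an element of order `p^N` has a cyclic direct summand of order
at least `p^N`. -/
theorem separable_p_group_has_large_cyclic_summand
    {p : ℕ} (hp : p.Prime) {A : Type*} [AddCommGroup A]
    (hpgroup : ∀ x : A, ∃ n : ℕ, p ^ n • x = 0)
    (hsep : ∀ a : A, (∀ k : ℕ, ∃ x : A, p ^ k • x = a) → a = 0)
    (N : ℕ) (a : A) (ha : addOrderOf a = p ^ N) :
    ∃ (k : ℕ) (b : A) (B : AddSubgroup A), N ≤ k ∧ addOrderOf b = p ^ k ∧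
      AddSubgroup.zmultiples b ⊓ B = ⊥ ∧ AddSubgroup.zmultiples b ⊔ B = ⊤ := by
  classical
  rcases Nat.eq_zero_or_pos N with hN | hN
  · subst hN
    have hdisj : ∀ x : A, p ^ 0 • x ∈ AddSubgroup.zmultiples (0 : A) →
        p ^ 0 • x = 0 := by
      intro x hx
      obtain ⟨t, ht⟩ := AddSubgroup.mem_zmultiples_iff.mp hx
      simpa using ht.symm
    obtain ⟨B, hB1, hB2⟩ := summand_aux hp (0 : A) (by simp) hdisj
    exact ⟨0, 0, B, le_rfl, by simp, hB1, hB2⟩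
  · -- N ≥ 1
    set a' := p ^ (N - 1) • a with ha'def
    have ha' : a' ≠ 0 := by
      intro h
      have h1 : addOrderOf a ∣ p ^ (N - 1) := addOrderOf_dvd_of_nsmul_eq_zero h
      rw [ha] at h1
      have := (Nat.pow_dvd_pow_iff_le_right hp.one_lt).mp h1
      omega
    have hDmono : ∀ {i j : ℕ}, i ≤ j → (∃ x : A, p ^ j • x = a') →
        (∃ x : A, p ^ i • x = a') := by
      rintro i j hij ⟨x, hx⟩
      exact ⟨p ^ (j - i) • x, by rw [smul_smul, ← pow_add, Nat.add_sub_cancel' hij]; exact hx⟩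
    have hnotall : ∃ n : ℕ, ¬ ∃ x : A, p ^ n • x = a' := by
      by_contra h
      push_neg at h
      exact ha' (hsep a' h)
    set M := Nat.find hnotall with hMdef
    have hMspec : ¬ ∃ x : A, p ^ M • x = a' := Nat.find_spec hnotall
    have hNM : N ≤ M := by
      by_contra h
      push_neg at h
      exact hMspec (hDmono (by omega) ⟨a, rfl⟩)
    have hMpos : 0 < M := lt_of_lt_of_le hN hNM
    have hDh : ∃ x : A, p ^ (M - 1) • x = a' :=
      not_not.mp (Nat.find_min hnotall (show M - 1 < M by omega))
    obtain ⟨b, hbh⟩ := hDh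
    have hMsucc : M = (M - 1) + 1 := by omega
    have hbord : addOrderOf b = p ^ M := by
      haveI : Fact p.Prime := ⟨hp⟩
      rw [hMsucc]
      refine addOrderOf_eq_prime_pow ?_ ?_
      · rw [hbh]; exact ha'
      · rw [← hMsucc]
        have h1 : p ^ M • b = p • a' := by
          rw [hMsucc, pow_succ, mul_comm, mul_smul, hbh]
        have h2 : p • a' = p ^ N • a := by
          rw [ha'def, smul_smul, ← pow_succ', Nat.sub_add_cancel hN]
        rw [h1, h2]
        exact addOrderOf_dvd_iff_nsmul_eq_zero.mp (by rw [ha])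
    have hdisj : ∀ x : A, p ^ M • x ∈ AddSubgroup.zmultiples b → p ^ M • x = 0 := by
      intro x hx
      obtain ⟨t, ht⟩ := AddSubgroup.mem_zmultiples_iff.mp hx
      have hpMb : ((p : ℤ) ^ M) • b = (0 : A) := by
        rw [show ((p : ℤ) ^ M) = (((p ^ M : ℕ) : ℤ)) by push_cast; ring, natCast_zsmul]
        exact addOrderOf_dvd_iff_nsmul_eq_zero.mp (by rw [hbord])
      by_cases hdvd : ((p : ℤ) ^ M) ∣ t
      · obtain ⟨s, rfl⟩ := hdvd
        rw [← ht, mul_comm, mul_smul, hpMb, smul_zero]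
      · exfalso
        have ht0 : t ≠ 0 := by rintro rfl; exact hdvd (dvd_zero _)
        set n := t.natAbs with hndef
        have hn0 : n ≠ 0 := Int.natAbs_ne_zero.mpr ht0
        set j := n.factorization p with hjdef
        have hpj : p ^ j ∣ n := Nat.ordProj_dvd n p
        set u := n / p ^ j with hudef
        have hnu : n = p ^ j * u := (Nat.ordProj_mul_ordCompl_eq_self n p).symm
        have hpu : ¬ p ∣ u := Nat.not_dvd_ordCompl hp hn0
        have hjM : j < M := by
          by_contra h
          push_neg at h
          have h0 : (p ^ M : ℕ) ∣ n := (pow_dvd_pow p h).trans hpj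
          have h1 : (((p ^ M : ℕ)) : ℤ) ∣ ((n : ℤ)) := Int.natCast_dvd_natCast.mpr h0
          have h2 : ((n : ℤ)) ∣ t := Int.natAbs_dvd.mpr dvd_rfl
          exact hdvd (by exact_mod_cast h1.trans h2)
        -- Bezout
        have hcop : Nat.Coprime (p ^ M) u := (Nat.Coprime.pow_left _ ((hp.coprime_iff_not_dvd).mpr hpu))
        have hicop : IsCoprime ((u : ℤ)) ((p : ℤ) ^ M) := by
          rw [Int.isCoprime_iff_gcd_eq_one,
            show ((p : ℤ) ^ M) = (((p ^ M : ℕ) : ℤ)) by push_cast; ring,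
            Int.gcd_natCast_natCast]
          exact Nat.coprime_comm.mp hcop
        obtain ⟨α, β, hαβ⟩ := hicop
        -- (n : ℤ) • b = p ^ M • x'
        have hnx : ∃ x' : A, ((n : ℤ)) • b = p ^ M • x' := by
          rcases Int.natAbs_eq t with h | h
          · exact ⟨x, by rw [hndef, ← h, ht]⟩
          · refine ⟨-x, ?_⟩
            have : ((n : ℤ)) • b = -(t • b) := by rw [h, neg_smul, neg_neg]
            rw [this, ht, smul_neg]
        obtain ⟨x', hx'⟩ := hnx
        -- p ^ j • b = p ^ M • (α • x')
        have hkey : p ^ j • b = p ^ M • (α • x') := by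
          have h1 : ((p : ℤ) ^ j) = α * (u : ℤ) * (p : ℤ) ^ j + β * (p : ℤ) ^ M * (p : ℤ) ^ j := by
            linear_combination (-((p : ℤ) ^ j)) * hαβ
          have h2 : ((p : ℤ) ^ j) • b = (α * (u : ℤ) * (p : ℤ) ^ j) • b +
              (β * (p : ℤ) ^ M * (p : ℤ) ^ j) • b := by
            rw [← add_smul, ← h1]
          have h3 : (α * (u : ℤ) * (p : ℤ) ^ j) • b = α • (((n : ℤ)) • b) := by
            rw [smul_smul]
            congr 1
            rw [hnu]
            push_cast
            ring
          have h4 : (β * (p : ℤ) ^ M * (p : ℤ) ^ j) • b = 0 := by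
            have h4a : (β * (p : ℤ) ^ M * (p : ℤ) ^ j) = (β * (p : ℤ) ^ j) * (p : ℤ) ^ M := by
              ring
            rw [h4a, mul_smul, hpMb, smul_zero]
          have h5 : ((p : ℤ) ^ j) • b = p ^ j • b := by
            rw [show ((p : ℤ) ^ j) = (((p ^ j : ℕ) : ℤ)) by push_cast; ring, natCast_zsmul]
          rw [← h5, h2, h3, h4, add_zero, hx']
          exact smul_comm α (p ^ M) x'
        -- contradiction: a' has height ≥ M
        have hfin : ∃ z : A, p ^ M • z = a' := by
          refine ⟨p ^ (M - 1 - j) • α • x', ?_⟩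
          have h6 : p ^ M • p ^ (M - 1 - j) • α • x' = p ^ (M - 1 - j) • p ^ M • α • x' :=
            smul_comm _ _ _
          rw [h6, ← hkey, smul_smul, ← pow_add, Nat.sub_add_cancel (by omega : j ≤ M - 1), hbh]
        exact hMspec hfin
    obtain ⟨B, hB1, hB2⟩ := summand_aux hp b hbord hdisj
    exact ⟨M, b, B, hNM, hbord, hB1, hB2⟩
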